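/- arXiv:1304.3481 — 7 statements merged into one kernel-verified Lean document; each statement's English description precedes it below -/
import Mathlib

section
/- Let p and q be coprime positive integers and let r be a nonnegative integer. The map F ↦ (F^p, F^q) is a bijection from the set {F ∈ ℂ[z] : F(0) = 1 and deg F ≤ r} onto the set {(U,V) ∈ ℂ[z] × ℂ[z] : U(0) = 1, V(0) = 1, deg U ≤ pr, deg V ≤ qr, and U^q = V^p}. -/
lemma field_aux {K : Type*} [Field K] (p q : ℕ) (hp0 : 0 < p) (hpq : Nat.Coprime p q)
    {x y : K} (hx : x ≠ 0) (hxp : x ^ p = y ^ p) (hxq : x ^ q = y ^ q) : x = y := by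
  have hy : y ≠ 0 := by
    rintro rfl
    rw [zero_pow hp0.ne'] at hxp
    exact hx ((pow_eq_zero_iff hp0.ne').mp hxp)
  have h1 : (1 : ℤ) = p * Nat.gcdA p q + q * Nat.gcdB p q := by
    have := Nat.gcd_eq_gcd_ab p q
    rwa [hpq.gcd_eq_one] at this
  calc x = x ^ (1 : ℤ) := (zpow_one x).symm
    _ = (x ^ (p : ℤ)) ^ Nat.gcdA p q * (x ^ (q : ℤ)) ^ Nat.gcdB p q := by
        rw [h1, zpow_add₀ hx, zpow_mul, zpow_mul]
    _ = (y ^ (p : ℤ)) ^ Nat.gcdA p q * (y ^ (q : ℤ)) ^ Nat.gcdB p q := by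
        rw [zpow_natCast, zpow_natCast, hxp, hxq, ← zpow_natCast y p, ← zpow_natCast y q]
    _ = y ^ (1 : ℤ) := by rw [← zpow_mul, ← zpow_mul, ← zpow_add₀ hy, ← h1]
    _ = y := zpow_one y

theorem stmt_1 (p q r : ℕ) (hp : 0 < p) (hq : 0 < q) (hpq : Nat.Coprime p q) :
    Set.BijOn (fun F : Polynomial ℂ => (F ^ p, F ^ q))
      {F : Polynomial ℂ | F.coeff 0 = 1 ∧ F.natDegree ≤ r}
      {UV : Polynomial ℂ × Polynomial ℂ |
        UV.1.coeff 0 = 1 ∧ UV.2.coeff 0 = 1 ∧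
        UV.1.natDegree ≤ p * r ∧ UV.2.natDegree ≤ q * r ∧ UV.1 ^ q = UV.2 ^ p} := by
  set K := RatFunc ℂ
  set φ : Polynomial ℂ →+* K := algebraMap (Polynomial ℂ) K with hφ
  have hinj : Function.Injective φ := IsFractionRing.injective _ _
  refine ⟨?_, ?_, ?_⟩
  · rintro F ⟨hF0, hFd⟩
    refine ⟨?_, ?_, ?_, ?_, ?_⟩
    · simp [Polynomial.coeff_zero_eq_eval_zero, hF0,
        ← Polynomial.coeff_zero_eq_eval_zero F, hF0]
    · simp [Polynomial.coeff_zero_eq_eval_zero,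
        ← Polynomial.coeff_zero_eq_eval_zero F, hF0]
    · simpa [Polynomial.natDegree_pow] using Nat.mul_le_mul_left p hFd
    · simpa [Polynomial.natDegree_pow] using Nat.mul_le_mul_left q hFd
    · simp only
      rw [← pow_mul, ← pow_mul, mul_comm]
  · rintro F ⟨hF0, _⟩ G ⟨hG0, _⟩ h
    simp only [Prod.mk.injEq] at h
    have hFne : φ F ≠ 0 := by
      intro h0
      have : F = 0 := hinj (by simpa using h0)
      simp [this] at hF0
    apply hinj
    apply field_aux p q hp hpq hFne
    · rw [← map_pow, ← map_pow, h.1]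
    · rw [← map_pow, ← map_pow, h.2]
  · rintro ⟨U, V⟩ ⟨hU0, hV0, hUd, hVd, hUV⟩
    simp only at hU0 hV0 hUd hVd hUV
    have hUne : U ≠ 0 := by intro h; simp [h] at hU0
    have hVne : V ≠ 0 := by intro h; simp [h] at hV0
    have hu : φ U ≠ 0 := fun h => hUne (hinj (by simpa using h))
    have hv : φ V ≠ 0 := fun h => hVne (hinj (by simpa using h))
    have huv : (φ U) ^ q = (φ V) ^ p := by rw [← map_pow, ← map_pow, hUV]
    have h1 : (1 : ℤ) = p * Nat.gcdA p q + q * Nat.gcdB p q := by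
      have := Nat.gcd_eq_gcd_ab p q
      rwa [hpq.gcd_eq_one] at this
    set a := Nat.gcdA p q
    set b := Nat.gcdB p q
    set f : K := (φ U) ^ a * (φ V) ^ b with hf
    have hfp : f ^ p = φ U := by
      have : f ^ p = (φ U) ^ (a * p) * (φ V) ^ (b * p) := by
        rw [hf, mul_pow, ← zpow_natCast ((φ U) ^ a), ← zpow_natCast ((φ V) ^ b),
          ← zpow_mul, ← zpow_mul]
      rw [this]
      have h2 : (φ V) ^ (b * p) = (φ U) ^ (q * b) := by
        rw [mul_comm b (p : ℤ), zpow_mul, zpow_natCast, ← huv, ← zpow_natCast (φ U),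
          ← zpow_mul]
      rw [h2, ← zpow_add₀ hu]
      have : a * p + q * b = (1 : ℤ) := by rw [h1]; ring
      rw [this, zpow_one]
    have hfq : f ^ q = φ V := by
      have : f ^ q = (φ U) ^ (a * q) * (φ V) ^ (b * q) := by
        rw [hf, mul_pow, ← zpow_natCast ((φ U) ^ a), ← zpow_natCast ((φ V) ^ b),
          ← zpow_mul, ← zpow_mul]
      rw [this]
      have h2 : (φ U) ^ (a * q) = (φ V) ^ (p * a) := by
        rw [mul_comm a (q : ℤ), zpow_mul, zpow_natCast, huv, ← zpow_natCast (φ V),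
          ← zpow_mul]
      rw [h2, ← zpow_add₀ hv]
      have : p * a + b * q = (1 : ℤ) := by rw [h1]; ring
      rw [this, zpow_one]
    have hint : IsIntegral (Polynomial ℂ) f := by
      refine ⟨Polynomial.X ^ p - Polynomial.C U, Polynomial.monic_X_pow_sub_C U hp.ne', ?_⟩
      simp [Polynomial.eval₂_sub, hfp]
      exact sub_self _
    obtain ⟨F, hF⟩ := IsIntegrallyClosed.isIntegral_iff.mp hint
    have hFp : F ^ p = U := hinj (by rw [map_pow, hF]; exact hfp)
    have hFq : F ^ q = V := hinj (by rw [map_pow, hF]; exact hfq)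
    have hc : F.coeff 0 ^ p = 1 := by
      rw [Polynomial.coeff_zero_eq_eval_zero, ← Polynomial.eval_pow, hFp,
        ← Polynomial.coeff_zero_eq_eval_zero, hU0]
    have hcq : F.coeff 0 ^ q = 1 := by
      rw [Polynomial.coeff_zero_eq_eval_zero, ← Polynomial.eval_pow, hFq,
        ← Polynomial.coeff_zero_eq_eval_zero, hV0]
    have hcne : F.coeff 0 ≠ 0 := by
      intro h; rw [h, zero_pow hp.ne'] at hc; exact zero_ne_one hc
    have hc1 : F.coeff 0 = 1 := field_aux p q hp hpq hcne (by simpa using hc) (by simpa using hcq)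
    have hdeg : F.natDegree ≤ r := by
      have : p * F.natDegree ≤ p * r := by
        rw [← Polynomial.natDegree_pow, hFp]; exact hUd
      exact Nat.le_of_mul_le_mul_left this hp
    exact ⟨F, ⟨hc1, hdeg⟩, by simp [hFp, hFq]⟩
end

section
/- Let p and q be coprime positive integers and let r be a positive integer. Suppose U, V ∈ ℂ[z] satisfy U(0) = 1, V(0) = 1, the coefficients of U vanish in all degrees 1, 2, …, r, the coefficients of V vanish in all degrees 1, 2, …, r, deg U ≤ pr, deg V ≤ qr, and U^q = V^p. Then U = 1 and V = 1. -/
open Polynomial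

private lemma bezout_nat {p q : ℕ} (hp : 0 < p) (hq : 0 < q) (hpq : Nat.Coprime p q) :
    ∃ a b : ℕ, a * p = b * q + 1 := by
  have ht : 0 < Nat.totient q := Nat.totient_pos.mpr hq
  have hmod : p ^ Nat.totient q ≡ 1 [MOD q] := Nat.ModEq.pow_totient hpq
  have hx1 : 1 ≤ p ^ Nat.totient q := Nat.one_le_pow _ _ hp
  have hdvd : q ∣ p ^ Nat.totient q - 1 := (Nat.modEq_iff_dvd' hx1).mp hmod.symm
  obtain ⟨b, hb⟩ := hdvd
  refine ⟨p ^ (Nat.totient q - 1), b, ?_⟩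
  have : p ^ (Nat.totient q - 1) * p = p ^ Nat.totient q := by
    rw [← pow_succ]; congr 1; omega
  rw [this, mul_comm q b] at *
  omega

private lemma coeff_zero_pow' (P : Polynomial ℂ) (n : ℕ) :
    (P ^ n).coeff 0 = (P.coeff 0) ^ n := by
  simp [Polynomial.coeff_zero_eq_eval_zero]

private lemma aux_pow_coeff (G : Polynomial ℂ) (hG0 : G.coeff 0 = 1) (i : ℕ) (hi : 1 ≤ i)
    (hlow : ∀ j, 1 ≤ j → j < i → G.coeff j = 0) (n : ℕ) :
    (G ^ n).coeff i = n * G.coeff i := by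
  induction n with
  | zero => simp only [pow_zero, Polynomial.coeff_one, Nat.cast_zero, zero_mul, if_neg (by omega : ¬ i = 0)]
  | succ n ih =>
    rw [pow_succ, mul_comm, Polynomial.coeff_mul,
      Finset.Nat.sum_antidiagonal_eq_sum_range_succ_mk, Finset.sum_range_succ]
    have h1 : ∑ k ∈ Finset.range i, G.coeff k * (G ^ n).coeff (i - k) = (G ^ n).coeff i := by
      rw [Finset.sum_eq_single_of_mem 0 (Finset.mem_range.mpr hi)]
      · simp [hG0]
      · intro k hk hk0
        rw [hlow k (by omega) (Finset.mem_range.mp hk), zero_mul]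
    rw [h1, ih, Nat.sub_self, coeff_zero_pow', hG0, one_pow]
    push_cast
    ring

theorem stmt_2 (p q r : ℕ) (hp : 0 < p) (hq : 0 < q) (hpq : Nat.Coprime p q) (hr : 0 < r)
    (U V : Polynomial ℂ) (hU0 : U.coeff 0 = 1) (hV0 : V.coeff 0 = 1)
    (hUlow : ∀ i : ℕ, 1 ≤ i → i ≤ r → U.coeff i = 0)
    (hVlow : ∀ i : ℕ, 1 ≤ i → i ≤ r → V.coeff i = 0)
    (hUdeg : U.natDegree ≤ p * r) (hVdeg : V.natDegree ≤ q * r)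
    (h : U ^ q = V ^ p) : U = 1 ∧ V = 1 := by
  have hVne : V ≠ 0 := fun h0 => by simp [h0] at hV0
  have hUne : U ≠ 0 := fun h0 => by simp [h0] at hU0
  obtain ⟨a, b, hab⟩ := bezout_nat hp hq hpq
  have hUap : (U ^ a) ^ p = (V ^ b) ^ p * U := by
    rw [← pow_mul, ← pow_mul, hab, pow_succ, mul_comm b q, pow_mul, h, ← pow_mul, Nat.mul_comm p b]
  have hdvd : V ^ b ∣ U ^ a := by
    rw [← IsIntegrallyClosed.pow_dvd_pow_iff hp.ne']
    exact ⟨U, hUap⟩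
  obtain ⟨F, hF⟩ := hdvd
  have hFp : F ^ p = U := by
    have h2 : (V ^ b) ^ p * F ^ p = (V ^ b) ^ p * U := by
      rw [← mul_pow, ← hF, hUap]
    exact mul_left_cancel₀ (pow_ne_zero _ (pow_ne_zero _ hVne)) h2
  set c := F.coeff 0 with hc
  have hcp : c ^ p = 1 := by rw [hc, ← coeff_zero_pow', hFp, hU0]
  have hcne : c ≠ 0 := fun h0 => by simp [h0, zero_pow hp.ne'] at hcp
  set G := Polynomial.C c⁻¹ * F with hG
  have hGp : G ^ p = U := by
    rw [hG, mul_pow, ← Polynomial.C_pow, inv_pow, hcp, inv_one, Polynomial.C_1, one_mul, hFp]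
  have hG0 : G.coeff 0 = 1 := by
    rw [hG, Polynomial.coeff_C_mul, ← hc, inv_mul_cancel₀ hcne]
  have hGne : G ≠ 0 := fun h0 => by simp [h0] at hG0
  have hGdeg : G.natDegree ≤ r := by
    have : p * G.natDegree ≤ p * r := by
      rw [← Polynomial.natDegree_pow, hGp]; exact hUdeg
    exact Nat.le_of_mul_le_mul_left this hp
  have hGall : ∀ i, 1 ≤ i → G.coeff i = 0 := by
    intro i
    induction i using Nat.strong_induction_on with
    | _ i ih =>
      intro hi
      by_cases hir : i ≤ r
      · have hk := aux_pow_coeff G hG0 i hi (fun j hj hji => ih j hji hj) p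
        rw [hGp, hUlow i hi hir] at hk
        have hpne : (p : ℂ) ≠ 0 := Nat.cast_ne_zero.mpr hp.ne'
        field_simp at hk
        exact (mul_eq_zero.mp hk.symm).resolve_left hpne
      · exact Polynomial.coeff_eq_zero_of_natDegree_lt (by omega)
  have hG1 : G = 1 := by
    ext i
    rcases Nat.eq_zero_or_pos i with h0 | h1
    · simp [h0, hG0]
    · rw [hGall i h1, Polynomial.coeff_one, if_neg (by omega)]
  have hU1 : U = 1 := by rw [← hGp, hG1, one_pow]
  have hVp1 : V ^ p = 1 := by rw [← h, hU1, one_pow]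
  have hVdeg0 : V.natDegree = 0 := by
    have : p * V.natDegree = 0 := by
      rw [← Polynomial.natDegree_pow, hVp1, Polynomial.natDegree_one]
    exact (Nat.mul_eq_zero.mp this).resolve_left hp.ne'
  have hV1 : V = 1 := by
    rw [Polynomial.eq_C_of_natDegree_eq_zero hVdeg0, hV0, Polynomial.C_1]
  exact ⟨hU1, hV1⟩
end

section
/- Let p and q be coprime positive integers. The number of lattice paths from (0,0) to (p,q), each of whose steps increases exactly one coordinate by 1, and each of whose vertices (x,y) satisfies p·y ≤ q·x, is equal to (p+q−1)!/(p!·q!). -/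
namespace Stmt3

/-- prefix count of `true`s. -/
def cnt (w : ℕ → Bool) (i : ℕ) : ℕ := ((Finset.range i).filter (fun j => w j = true)).card

/-- rotation of a word. -/
def rot (k : ℕ) (w : ℕ → Bool) : ℕ → Bool := fun j => w (j + k)

/-- the height function. -/
def S (p n : ℕ) (w : ℕ → Bool) (i : ℕ) : ℤ := (n : ℤ) * cnt w i - (p : ℤ) * i

def Good (p n : ℕ) (w : ℕ → Bool) : Prop := ∀ i ≤ n, 0 ≤ S p n w i

/-- periodic extension of a finite word. -/
def extF (n : ℕ) (w : Fin n → Bool) : ℕ → Bool :=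
  fun j => if h : j % n < n then w ⟨j % n, h⟩ else false

def cntF {n : ℕ} (w : Fin n → Bool) : ℕ :=
  (Finset.univ.filter (fun j => w j = true)).card

lemma cnt_zero (w : ℕ → Bool) : cnt w 0 = 0 := by simp [cnt]

lemma cnt_succ (w : ℕ → Bool) (i : ℕ) :
    cnt w (i + 1) = cnt w i + if w i = true then 1 else 0 := by
  simp only [cnt, Finset.range_add_one, Finset.filter_insert]
  split <;> simp [Finset.card_insert_of_notMem]

lemma cnt_mono (w : ℕ → Bool) {a b : ℕ} (h : a ≤ b) : cnt w a ≤ cnt w b :=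
  Finset.card_le_card (Finset.filter_subset_filter _ (Finset.range_subset_range.2 h))

lemma cnt_add (w : ℕ → Bool) (k i : ℕ) :
    cnt w (k + i) = cnt w k + cnt (rot k w) i := by
  induction i with
  | zero => simp [cnt]
  | succ i ih =>
      rw [← Nat.add_assoc, cnt_succ, ih, cnt_succ]
      have : rot k w i = w (k + i) := by simp [rot, Nat.add_comm]
      rw [this, Nat.add_assoc]

lemma rot_rot (a b : ℕ) (w : ℕ → Bool) : rot a (rot b w) = rot (a + b) w := by
  funext j; simp [rot, Nat.add_assoc]

section Periodic

variable {n : ℕ} {w : ℕ → Bool}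

lemma rot_n_eq (hper : ∀ j, w (j + n) = w j) : rot n w = w := by funext j; exact hper j

lemma period_mod {α : Sort*} {v : ℕ → α} (hv : ∀ j, v (j + n) = v j) (hn : 0 < n) (j : ℕ) :
    v j = v (j % n) := by
  induction j using Nat.strong_induction_on with
  | _ j ih =>
    rcases lt_or_ge j n with h | h
    · rw [Nat.mod_eq_of_lt h]
    · have h1 : j - n + n = j := Nat.sub_add_cancel h
      have h2 : v j = v (j - n) := by nth_rewrite 1 [← h1]; exact hv _
      rw [h2, ih (j - n) (by omega), Nat.mod_eq_sub_mod h]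

end Periodic


lemma rot_zero (w : ℕ → Bool) : rot 0 w = w := by funext j; simp [rot]

section Cycle

variable {p q n : ℕ} {w : ℕ → Bool}

lemma S_rot (p n : ℕ) (w : ℕ → Bool) (k i : ℕ) :
    S p n (rot k w) i = S p n w (k + i) - S p n w k := by
  simp only [S, cnt_add w k i]
  push_cast
  ring

variable (hper : ∀ j, w (j + n) = w j) (hcnt : cnt w n = p)

include hper hcnt in
lemma S_period (i : ℕ) : S p n w (i + n) = S p n w i := by
  have h1 : cnt w (n + i) = p + cnt w i := by
    rw [cnt_add, hcnt, rot_n_eq hper]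
  simp only [S, Nat.add_comm i n, h1]
  push_cast; ring

include hper hcnt in
lemma S_mod (hn : 0 < n) (j : ℕ) : S p n w j = S p n w (j % n) :=
  period_mod (S_period hper hcnt) hn j

include hper hcnt in
lemma cnt_rot_full (k : ℕ) : cnt (rot k w) n = p := by
  have h1 : cnt w (k + n) = cnt w k + cnt (rot k w) n := cnt_add w k n
  have h2 : cnt w (n + k) = cnt w n + cnt w k := by rw [cnt_add, rot_n_eq hper]
  rw [hcnt] at h2
  rw [Nat.add_comm k n, h2] at h1
  omega

include hper in
lemma rot_per (k : ℕ) : ∀ j, rot k w (j + n) = rot k w j := by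
  intro j
  simp only [rot]
  rw [show j + n + k = (j + k) + n by omega, hper]

lemma good_rot_iff (k : ℕ) :
    Good p n (rot k w) ↔ ∀ i ≤ n, S p n w k ≤ S p n w (k + i) := by
  simp only [Good, S_rot, sub_nonneg]

include hper hcnt in
lemma S_inj (hp : 0 < p) (hpq : Nat.Coprime p q) (hn : n = p + q)
    {a b : ℕ} (ha : a < n) (hb : b < n) (hS : S p n w a = S p n w b) : a = b := by
  have hn0 : 0 < n := by omega
  suffices key : ∀ a b : ℕ, a ≤ b → b < n → S p n w a = S p n w b → a = b by
    rcases le_total a b with h | h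
    · exact key a b h hb hS
    · exact (key b a h ha hS.symm).symm
  intro a b hab hbn hS
  have hc : cnt w a ≤ cnt w b := cnt_mono w hab
  have hznat : n * (cnt w b - cnt w a) = p * (b - a) := by
    have h1 : ((n * (cnt w b - cnt w a) : ℕ) : ℤ) = ((p * (b - a) : ℕ) : ℤ) := by
      rw [Nat.cast_mul, Nat.cast_mul, Nat.cast_sub hc, Nat.cast_sub hab]
      simp only [S] at hS
      linarith
    exact_mod_cast h1
  have hdvd : n ∣ p * (b - a) := ⟨_, hznat.symm⟩
  have hcop : Nat.Coprime n p := by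
    rw [hn, Nat.add_comm]
    exact Nat.coprime_add_self_left.mpr hpq.symm
  have hdvd2 : n ∣ (b - a) := hcop.dvd_of_dvd_mul_left hdvd
  rcases Nat.eq_zero_or_pos (b - a) with h0 | h0
  · omega
  · have := Nat.le_of_dvd h0 hdvd2
    omega

include hper hcnt in
lemma good_unique (hp : 0 < p) (hpq : Nat.Coprime p q) (hn : n = p + q)
    {a b : ℕ} (ha : a < n) (hb : b < n)
    (hga : Good p n (rot a w)) (hgb : Good p n (rot b w)) : a = b := by
  have hmin : ∀ x y : ℕ, x < n → y < n → Good p n (rot x w) → S p n w x ≤ S p n w y := by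
    intro x y hx hy hgx
    have h := (good_rot_iff x).mp hgx
    rcases le_total x y with hxy | hxy
    · have := h (y - x) (by omega)
      rwa [show x + (y - x) = y by omega] at this
    · have := h (y + n - x) (by omega)
      rwa [show x + (y + n - x) = y + n by omega, S_period hper hcnt] at this
  exact S_inj hper hcnt hp hpq hn ha hb
    (le_antisymm (hmin a b ha hb hga) (hmin b a hb ha hgb))

include hper hcnt in
lemma good_exists (hn0 : 0 < n) : ∃ k < n, Good p n (rot k w) := by
  obtain ⟨k, hk, hmin⟩ :=
    Finset.exists_min_image (Finset.range n) (S p n w) ⟨0, Finset.mem_range.2 hn0⟩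
  refine ⟨k, Finset.mem_range.mp hk, ?_⟩
  rw [good_rot_iff]
  intro i hi
  rw [S_mod hper hcnt hn0 (k + i)]
  exact hmin _ (Finset.mem_range.2 (Nat.mod_lt _ hn0))

end Cycle

section ExtF

variable {n : ℕ}

lemma extF_lt (w : Fin n → Bool) {j : ℕ} (h : j < n) : extF n w j = w ⟨j, h⟩ := by
  simp only [extF, Nat.mod_eq_of_lt h]
  rw [dif_pos h]

lemma extF_apply (hn : 0 < n) (w : Fin n → Bool) (j : ℕ) :
    extF n w j = w ⟨j % n, Nat.mod_lt _ hn⟩ := dif_pos _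

lemma extF_per (w : Fin n → Bool) : ∀ j, extF n w (j + n) = extF n w j := by
  intro j; simp [extF, Nat.add_mod_right]

lemma cnt_restrict (n : ℕ) (v : ℕ → Bool) : cnt v n = cntF (fun j : Fin n => v j) := by
  unfold cnt cntF
  rw [Finset.card_filter, Finset.card_filter,
    ← Fin.sum_univ_eq_sum_range (fun j => if v j = true then 1 else 0) n]

lemma restrict_extF (w : Fin n → Bool) : (fun j : Fin n => extF n w j) = w := by
  funext j
  simp [extF_lt w j.isLt]

lemma cnt_extF (w : Fin n → Bool) : cnt (extF n w) n = cntF w := by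
  rw [cnt_restrict, restrict_extF]

lemma extF_of_per (hn : 0 < n) {v : ℕ → Bool} (hper : ∀ j, v (j + n) = v j) :
    extF n (fun j : Fin n => v j) = v := by
  funext j
  rw [extF_apply hn]
  exact (period_mod hper hn j).symm

end ExtF


lemma card_C (n p : ℕ) :
    Nat.card {w : Fin n → Bool // cntF w = p} = n.choose p := by
  rw [Nat.card_eq_fintype_card]
  have e : {w : Fin n → Bool // cntF w = p} ≃ {s : Finset (Fin n) // s.card = p} :=
    { toFun := fun w => ⟨Finset.univ.filter (fun j => w.1 j = true), w.2⟩
      invFun := fun s => ⟨fun j => decide (j ∈ s.1), by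
        unfold cntF
        simp only [decide_eq_true_eq]
        rw [Finset.filter_univ_mem]
        exact s.2⟩
      left_inv := fun w => by
        apply Subtype.ext
        funext j
        simp
      right_inv := fun s => by
        apply Subtype.ext
        simp [Finset.filter_univ_mem] }
  rw [Fintype.card_congr e, Fintype.card_finset_len, Fintype.card_fin]

theorem card_good (p q : ℕ) (hp : 0 < p) (hq : 0 < q) (hpq : Nat.Coprime p q) :
    Nat.card {w : Fin (p + q) → Bool // cntF w = p ∧ Good p (p + q) (extF (p + q) w)} * (p + q)
      = (p + q).choose p := by
  set n := p + q with hn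
  have hn0 : 0 < n := by omega
  let B := {w : Fin n → Bool // cntF w = p ∧ Good p n (extF n w)}
  let C := {w : Fin n → Bool // cntF w = p}
  let Φ : B × Fin n → C := fun x =>
    ⟨fun j => rot x.2 (extF n x.1.1) j, by
      have hper := extF_per x.1.1
      have hcnt : cnt (extF n x.1.1) n = p := by rw [cnt_extF]; exact x.1.2.1
      rw [← cnt_restrict]
      exact cnt_rot_full hper hcnt _⟩
  have hinj : Function.Injective Φ := by
    rintro ⟨⟨w, hw1, hw2⟩, k⟩ ⟨⟨w', hw1', hw2'⟩, k'⟩ h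
    have hres : (fun j : Fin n => rot k (extF n w) j) = fun j : Fin n => rot k' (extF n w') j :=
      congrArg Subtype.val h
    have hrot : rot k.1 (extF n w) = rot k'.1 (extF n w') := by
      have h1 := extF_of_per hn0 (rot_per (extF_per w) k.1)
      have h2 := extF_of_per hn0 (rot_per (extF_per w') k'.1)
      rw [← h1, ← h2, hres]
    have key : ∀ (u u' : Fin n → Bool), cntF u = p → Good p n (extF n u) →
        cntF u' = p → Good p n (extF n u') → ∀ a b : ℕ, a < n → b < n → a ≤ b →
        rot a (extF n u) = rot b (extF n u') → extF n u = extF n u' ∧ a = b := by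
      intro u u' hu1 hu2 hu1' hu2' a b han hbn hab hr
      set v := extF n u with hv
      set v' := extF n u' with hv'
      have hperv : ∀ j, v (j + n) = v j := extF_per u
      have hperv' : ∀ j, v' (j + n) = v' j := extF_per u'
      have hcv : cnt v n = p := by rw [hv, cnt_extF]; exact hu1
      have hcv' : cnt v' n = p := by rw [hv', cnt_extF]; exact hu1'
      set d := b - a with hd
      have hptw : ∀ j, v (j + a) = v' (j + a + d) := by
        intro j
        have := congrFun hr j
        simp only [rot] at this
        rwa [show j + b = j + a + d by omega] at this
      have hveq : v = rot d v' := by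
        funext m
        show v m = v' (m + d)
        rcases le_or_gt a m with hm | hm
        · have := hptw (m - a)
          rwa [show m - a + a = m by omega] at this
        · have := hptw (m + n - a)
          rw [show m + n - a + a = m + n by omega] at this
          rw [show m + n + d = (m + d) + n by omega, hperv m, hperv' (m + d)] at this
          exact this
      have hgv' : Good p n (rot 0 v') := by rwa [rot_zero]
      have hgd : Good p n (rot d v') := by rwa [← hveq]
      have hd0 : 0 = d :=
        good_unique hperv' hcv' hp hpq hn hn0 (by omega) hgv' hgd
      constructor
      · rw [hveq, ← hd0, rot_zero]
      · omega
    rcases le_total k.1 k'.1 with hkk | hkk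
    · obtain ⟨hww, hkk'⟩ := key w w' hw1 hw2 hw1' hw2' k.1 k'.1 k.isLt k'.isLt hkk hrot
      have : w = w' := by rw [← restrict_extF w, ← restrict_extF w', hww]
      subst this
      simp only [Prod.mk.injEq, Subtype.mk.injEq]
      exact ⟨trivial, Fin.ext hkk'⟩
    · obtain ⟨hww, hkk'⟩ := key w' w hw1' hw2' hw1 hw2 k'.1 k.1 k'.isLt k.isLt hkk hrot.symm
      have : w' = w := by rw [← restrict_extF w, ← restrict_extF w', hww]
      subst this
      simp only [Prod.mk.injEq, Subtype.mk.injEq]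
      exact ⟨trivial, Fin.ext hkk'.symm⟩
  have hsurj : Function.Surjective Φ := by
    rintro ⟨u, hu⟩
    set v := extF n u with hv
    have hper : ∀ j, v (j + n) = v j := extF_per u
    have hcnt : cnt v n = p := by rw [hv, cnt_extF]; exact hu
    obtain ⟨k, hk, hgood⟩ := good_exists hper hcnt hn0
    refine ⟨⟨⟨fun j => rot k v j, ?_, ?_⟩, ⟨(n - k) % n, Nat.mod_lt _ hn0⟩⟩, ?_⟩
    · rw [← cnt_restrict]
      exact cnt_rot_full hper hcnt k
    · rw [extF_of_per hn0 (rot_per hper k)]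
      exact hgood
    · apply Subtype.ext
      funext j
      show rot ((n - k) % n) (extF n (fun j : Fin n => rot k v j)) j.1 = u j
      rw [extF_of_per hn0 (rot_per hper k), rot_rot]
      have hc : rot ((n - k) % n + k) v = v := by
        rcases Nat.eq_zero_or_pos k with h0 | h0
        · rw [h0, show (n - 0) % n + 0 = 0 by simp, rot_zero]
        · rw [show (n - k) % n + k = n by rw [Nat.mod_eq_of_lt (by omega)]; omega]
          exact rot_n_eq hper
      rw [hc, hv, extF_lt u j.isLt]
  have hcard := Nat.card_congr (Equiv.ofBijective Φ ⟨hinj, hsurj⟩)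
  rw [Nat.card_prod, Nat.card_eq_fintype_card (α := Fin n), Fintype.card_fin] at hcard
  rw [hcard, card_C]


theorem card_paths (p q : ℕ) (hp : 0 < p) (hq : 0 < q) :
    Nat.card {f : Fin (p + q + 1) → ℤ × ℤ //
        f 0 = (0, 0) ∧ f (Fin.last (p + q)) = ((p : ℤ), (q : ℤ)) ∧
        (∀ i : Fin (p + q),
          f i.succ = f i.castSucc + (1, 0) ∨ f i.succ = f i.castSucc + (0, 1)) ∧
        (∀ i : Fin (p + q + 1), (p : ℤ) * (f i).2 ≤ (q : ℤ) * (f i).1)}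
      = Nat.card {w : Fin (p + q) → Bool // cntF w = p ∧ Good p (p + q) (extF (p + q) w)} := by
  set n := p + q with hn
  let path : (Fin n → Bool) → Fin (n + 1) → ℤ × ℤ := fun w i =>
    ((cnt (extF n w) i.1 : ℤ), (i.1 : ℤ) - cnt (extF n w) i.1)
  let Ψ : {w : Fin n → Bool // cntF w = p ∧ Good p n (extF n w)} →
      {f : Fin (n + 1) → ℤ × ℤ //
        f 0 = (0, 0) ∧ f (Fin.last n) = ((p : ℤ), (q : ℤ)) ∧
        (∀ i : Fin n,
          f i.succ = f i.castSucc + (1, 0) ∨ f i.succ = f i.castSucc + (0, 1)) ∧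
        (∀ i : Fin (n + 1), (p : ℤ) * (f i).2 ≤ (q : ℤ) * (f i).1)} := fun ⟨w, hw1, hw2⟩ =>
    ⟨path w, by
      simp [path, cnt_zero], by
      have hc : cnt (extF n w) n = p := by rw [cnt_extF]; exact hw1
      simp only [path, Fin.val_last, hc, Prod.mk.injEq]
      refine ⟨trivial, ?_⟩
      omega, by
      intro i
      have hcs : cnt (extF n w) (i.1 + 1) =
          cnt (extF n w) i.1 + if extF n w i.1 = true then 1 else 0 := cnt_succ _ _
      cases h : extF n w i.1 with
      | true =>
          left
          rw [h, if_pos rfl] at hcs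
          simp only [path, Fin.val_succ, Fin.coe_castSucc, hcs, Prod.mk.injEq, Prod.mk_add_mk]
          constructor
          · push_cast; ring
          · push_cast; ring
      | false =>
          right
          rw [h] at hcs
          simp only [Bool.false_eq_true, if_false, Nat.add_zero] at hcs
          simp only [path, Fin.val_succ, Fin.coe_castSucc, hcs, Prod.mk.injEq, Prod.mk_add_mk]
          constructor
          · push_cast; ring
          · push_cast; ring, by
      intro i
      have hgi := hw2 i.1 (by omega)
      simp only [S] at hgi
      simp only [path]
      have hcast : ((n : ℕ) : ℤ) = (p : ℤ) + (q : ℤ) := by rw [hn]; push_cast; ring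
      rw [hcast] at hgi
      linarith⟩
  have hinj : Function.Injective Ψ := by
    rintro ⟨w, hw1, hw2⟩ ⟨w', hw1', hw2'⟩ h
    have hfun : path w = path w' := congrArg Subtype.val h
    have hcnt : ∀ k, k ≤ n → cnt (extF n w) k = cnt (extF n w') k := by
      intro k hk
      have := congrFun hfun ⟨k, by omega⟩
      simp only [path, Prod.mk.injEq] at this
      exact_mod_cast this.1
    apply Subtype.ext
    funext j
    have h1 := hcnt j.1 (by omega)
    have h2 := hcnt (j.1 + 1) (by omega)
    have e1 := cnt_succ (extF n w) j.1
    have e2 := cnt_succ (extF n w') j.1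
    have : extF n w j.1 = extF n w' j.1 := by
      cases hb : extF n w j.1 <;> cases hb' : extF n w' j.1 <;>
        rw [hb] at e1 <;> rw [hb'] at e2 <;> simp at e1 e2 <;> omega
    rw [extF_lt w j.isLt, extF_lt w' j.isLt] at this
    show w j = w' j
    exact this
  have hsurj : Function.Surjective Ψ := by
    rintro ⟨f, h0, hlast, hstep, hdiag⟩
    set w : Fin n → Bool := fun j => decide ((f j.succ).1 = (f j.castSucc).1 + 1) with hwdef
    have main : ∀ k (hk : k ≤ n), f ⟨k, Nat.lt_succ_of_le hk⟩ =
        ((cnt (extF n w) k : ℤ), (k : ℤ) - cnt (extF n w) k) := by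
      intro k
      induction k with
      | zero =>
          intro _
          have : (⟨0, Nat.lt_succ_of_le (Nat.zero_le n)⟩ : Fin (n + 1)) = 0 := by
            apply Fin.ext; simp
          rw [this, h0]
          simp [cnt_zero]
      | succ k ih =>
          intro hk1
          have hk : k ≤ n := by omega
          have hkn : k < n := by omega
          have IH := ih hk
          set i : Fin n := ⟨k, hkn⟩ with hidef
          have hisucc : i.succ = ⟨k + 1, Nat.lt_succ_of_le hk1⟩ := by apply Fin.ext; simp [hidef]
          have hicast : i.castSucc = ⟨k, Nat.lt_succ_of_le hk⟩ := by apply Fin.ext; simp [hidef]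
          have hext : extF n w k = w i := by rw [extF_lt w hkn]
          rcases hstep i with hs | hs
          · have hwi : w i = true := by
              rw [hwdef]
              simp only [decide_eq_true_eq]
              rw [hs]
              simp
            have hcs : cnt (extF n w) (k + 1) = cnt (extF n w) k + 1 := by
              rw [cnt_succ, hext, hwi, if_pos rfl]
            rw [← hisucc, hs, hicast, IH, hcs]
            simp only [Prod.mk_add_mk, Prod.mk.injEq]
            constructor
            · push_cast; ring
            · push_cast; ring
          · have hwi : w i = false := by
              rw [hwdef]
              simp only [decide_eq_false_iff_not]
              rw [hs]
              intro hcontra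
              simp at hcontra
            have hcs : cnt (extF n w) (k + 1) = cnt (extF n w) k := by
              rw [cnt_succ, hext, hwi]
              simp
            rw [← hisucc, hs, hicast, IH, hcs]
            simp only [Prod.mk_add_mk, Prod.mk.injEq]
            constructor
            · push_cast; ring
            · push_cast; ring
    have hcn : cnt (extF n w) n = p := by
      have hm := main n le_rfl
      have : (⟨n, Nat.lt_succ_of_le le_rfl⟩ : Fin (n + 1)) = Fin.last n := by
        apply Fin.ext; simp
      rw [this, hlast] at hm
      have := congrArg Prod.fst hm
      simp only at this
      exact_mod_cast this.symm
    have hw1 : cntF w = p := by rw [← cnt_extF]; exact hcn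
    have hw2 : Good p n (extF n w) := by
      intro i hi
      have hm := main i hi
      have hd := hdiag ⟨i, Nat.lt_succ_of_le hi⟩
      rw [hm] at hd
      simp only [S]
      have hcast : ((n : ℕ) : ℤ) = (p : ℤ) + (q : ℤ) := by rw [hn]; push_cast; ring
      rw [hcast]
      simp only at hd
      linarith
    refine ⟨⟨w, hw1, hw2⟩, ?_⟩
    apply Subtype.ext
    funext i
    show path w i = f i
    have hm := main i.1 (by omega)
    rw [Fin.eta] at hm
    exact hm.symm
  exact (Nat.card_congr (Equiv.ofBijective Ψ ⟨hinj, hsurj⟩)).symm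

end Stmt3

/-- The number of lattice paths from `(0,0)` to `(p,q)` (each step increasing exactly one
coordinate by `1`), all of whose vertices `(x,y)` satisfy `p*y ≤ q*x`, times `p! * q!`,
equals `(p+q-1)!`; i.e. the number of such paths is `(p+q-1)!/(p!*q!)`. -/
theorem stmt_3 (p q : ℕ) (hp : 0 < p) (hq : 0 < q) (hpq : Nat.Coprime p q) :
    Nat.card {f : Fin (p + q + 1) → ℤ × ℤ //
        f 0 = (0, 0) ∧ f (Fin.last (p + q)) = ((p : ℤ), (q : ℤ)) ∧
        (∀ i : Fin (p + q),
          f i.succ = f i.castSucc + (1, 0) ∨ f i.succ = f i.castSucc + (0, 1)) ∧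
        (∀ i : Fin (p + q + 1), (p : ℤ) * (f i).2 ≤ (q : ℤ) * (f i).1)} *
      (p.factorial * q.factorial) = (p + q - 1).factorial := by
  have h1 := Stmt3.card_paths p q hp hq
  have h2 := Stmt3.card_good p q hp hq hpq
  rw [h1]
  set X := Nat.card
    {w : Fin (p + q) → Bool // Stmt3.cntF w = p ∧ Stmt3.Good p (p + q) (Stmt3.extF (p + q) w)}
    with hX
  have h3 : (p + q).choose p * p.factorial * q.factorial = (p + q).factorial := by
    have := Nat.choose_mul_factorial_mul_factorial (Nat.le_add_right p q)
    rwa [Nat.add_sub_cancel_left] at this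
  have h4 : (p + q) * (p + q - 1).factorial = (p + q).factorial :=
    Nat.mul_factorial_pred (Nat.add_pos_left hp q).ne'
  apply Nat.eq_of_mul_eq_mul_right (Nat.add_pos_left hp q)
  calc X * (p.factorial * q.factorial) * (p + q)
      = (X * (p + q)) * p.factorial * q.factorial := by ring
    _ = (p + q).choose p * p.factorial * q.factorial := by rw [h2]
    _ = (p + q).factorial := h3
    _ = (p + q) * (p + q - 1).factorial := h4.symm
    _ = (p + q - 1).factorial * (p + q) := by ring
end

section
/- Work in the ring of formal Laurent series in q with coefficients the Laurent polynomials ℤ[a^{±1}, t^{±1}] (power series in q with at most finitely many negative powers of q). Let P̄ = (a²q^{−2} + a²q²t² + a⁴t³) · a^{−1}q · (1 + a²t) · (1 − q²)^{−1}, where (1 − q²)^{−1} = Σ_{m≥0} q^{2m}. Then there exists an element X of this ring, all of whose coefficients are nonnegative integers, such that P̄ − (a q^{−1} + a q + a q³ t² + a³ q³ t³) = (1 + a^{−2} q⁴ t^{−1}) · X. -/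
noncomputable section

abbrev C4 : Type := AddMonoidAlgebra ℤ (ℤ × ℤ)

abbrev LS4 : Type := LaurentSeries C4

/-- `a` -/
def A4 : LS4 := HahnSeries.C (AddMonoidAlgebra.single ((1 : ℤ), (0 : ℤ)) (1 : ℤ))
/-- `a⁻¹` -/
def Ai4 : LS4 := HahnSeries.C (AddMonoidAlgebra.single ((-1 : ℤ), (0 : ℤ)) (1 : ℤ))
/-- `t` -/
def T4 : LS4 := HahnSeries.C (AddMonoidAlgebra.single ((0 : ℤ), (1 : ℤ)) (1 : ℤ))
/-- `t⁻¹` -/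
def Ti4 : LS4 := HahnSeries.C (AddMonoidAlgebra.single ((0 : ℤ), (-1 : ℤ)) (1 : ℤ))
/-- `q` -/
def Q4 : LS4 := HahnSeries.single (1 : ℤ) (1 : C4)
/-- `q⁻¹` -/
def Qi4 : LS4 := HahnSeries.single (-1 : ℤ) (1 : C4)

/-- monomial `a^i t^j q^k` -/
def M4 (i j k : ℤ) : LS4 :=
  HahnSeries.single k (AddMonoidAlgebra.single ((i : ℤ), (j : ℤ)) (1 : ℤ))

lemma M4_mul (i j k i' j' k' : ℤ) : M4 i j k * M4 i' j' k' = M4 (i+i') (j+j') (k+k') := by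
  rw [M4, M4, M4, HahnSeries.single_mul_single, AddMonoidAlgebra.single_mul_single, mul_one,
    Prod.mk_add_mk]

lemma A4_eq : A4 = M4 1 0 0 := rfl
lemma Ai4_eq : Ai4 = M4 (-1) 0 0 := rfl
lemma T4_eq : T4 = M4 0 1 0 := rfl
lemma Ti4_eq : Ti4 = M4 0 (-1) 0 := rfl
lemma Q4_eq : Q4 = M4 0 0 1 := by
  rw [Q4, M4, AddMonoidAlgebra.one_def]
  rfl
lemma Qi4_eq : Qi4 = M4 0 0 (-1) := by
  rw [Qi4, M4, AddMonoidAlgebra.one_def]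
  rfl

lemma key4 :
    (A4 ^ 2 * Qi4 ^ 2 + A4 ^ 2 * Q4 ^ 2 * T4 ^ 2 + A4 ^ 4 * T4 ^ 3) * Ai4 * Q4 *
        (1 + A4 ^ 2 * T4) -
      (A4 * Qi4 + A4 * Q4 + A4 * Q4 ^ 3 * T4 ^ 2 + A4 ^ 3 * Q4 ^ 3 * T4 ^ 3) * (1 - Q4 ^ 2) =
    (1 + Ai4 ^ 2 * Q4 ^ 4 * Ti4) * (M4 3 1 (-1) + M4 3 3 1 + M4 5 4 1) := by
  simp only [A4_eq, Ai4_eq, T4_eq, Ti4_eq, Q4_eq, Qi4_eq, pow_succ, pow_zero, one_mul,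
    mul_add, add_mul, sub_mul, mul_sub, mul_one, M4_mul]
  ring_nf

/-- The power series `∑ q^{2m}`. -/
def SP4 : PowerSeries C4 := PowerSeries.mk fun n => if Even n then 1 else 0

lemma SP4_inv : (1 - (PowerSeries.X : PowerSeries C4) ^ 2) * SP4 = 1 := by
  ext n
  rw [sub_mul, one_mul, map_sub, PowerSeries.coeff_X_pow_mul']
  match n with
  | 0 => simp [SP4]
  | 1 => simp [SP4]
  | (n+2) => simp [SP4, PowerSeries.coeff_one, Nat.even_add]

/-- The Laurent series `∑ q^{2m}`. -/
def S4 : LS4 := HahnSeries.ofPowerSeries ℤ C4 SP4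

lemma S4_inv : (1 - Q4 ^ 2) * S4 = 1 := by
  have hQ : Q4 = HahnSeries.ofPowerSeries ℤ C4 PowerSeries.X := (HahnSeries.ofPowerSeries_X).symm
  rw [hQ, S4, ← map_pow, ← map_one (HahnSeries.ofPowerSeries ℤ C4), ← map_sub, ← map_mul, SP4_inv]

lemma S4_coeff (n : ℤ) : S4.coeff n = 0 ∨ S4.coeff n = 1 := by
  have h : S4.coeff n = if n < 0 then 0 else PowerSeries.coeff n.natAbs SP4 :=
    PowerSeries.coeff_coe SP4 n
  rw [h]
  split
  · exact Or.inl rfl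
  · rw [SP4, PowerSeries.coeff_mk]
    split
    · exact Or.inr rfl
    · exact Or.inl rfl

lemma M4_mul_S4_coeff_nonneg (i j k : ℤ) (n : ℤ) (m : ℤ × ℤ) :
    0 ≤ ((M4 i j k * S4).coeff n).coeff m := by
  have hn : n = (n - k) + k := by ring
  rw [hn, M4, HahnSeries.coeff_single_mul_add]
  rcases S4_coeff (n - k) with h | h <;> rw [h]
  · simp
  · rw [mul_one, AddMonoidAlgebra.coeff_single, Finsupp.single_apply]
    split <;> norm_num

theorem stmt_4 :
    ∃ S : LS4, (1 - Q4 ^ 2) * S = 1 ∧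
      ∃ X : LS4, (∀ (n : ℤ) (m : ℤ × ℤ), 0 ≤ (X.coeff n).coeff m) ∧
        (A4 ^ 2 * Qi4 ^ 2 + A4 ^ 2 * Q4 ^ 2 * T4 ^ 2 + A4 ^ 4 * T4 ^ 3) * Ai4 * Q4 *
              (1 + A4 ^ 2 * T4) * S -
            (A4 * Qi4 + A4 * Q4 + A4 * Q4 ^ 3 * T4 ^ 2 + A4 ^ 3 * Q4 ^ 3 * T4 ^ 3) =
          (1 + Ai4 ^ 2 * Q4 ^ 4 * Ti4) * X := by
  refine ⟨S4, S4_inv, (M4 3 1 (-1) + M4 3 3 1 + M4 5 4 1) * S4, ?_, ?_⟩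
  · intro n m
    rw [add_mul, add_mul, HahnSeries.coeff_add, HahnSeries.coeff_add, AddMonoidAlgebra.coeff_add, Finsupp.add_apply,
      AddMonoidAlgebra.coeff_add, Finsupp.add_apply]
    exact add_nonneg (add_nonneg (M4_mul_S4_coeff_nonneg _ _ _ _ _)
      (M4_mul_S4_coeff_nonneg _ _ _ _ _)) (M4_mul_S4_coeff_nonneg _ _ _ _ _)
  · linear_combination S4 * key4 +
      (A4 * Qi4 + A4 * Q4 + A4 * Q4 ^ 3 * T4 ^ 2 + A4 ^ 3 * Q4 ^ 3 * T4 ^ 3) * S4_inv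

end
end

section
/- Let P̃(a,Q,tr,tc) = a⁴(Q^{−4} + tr²tc⁴ + tr²tc⁶ + Q⁴tr⁴tc⁸) + a⁶(Q^{−2}tr³tc⁵ + Q^{−2}tr³tc⁷ + Q²tr⁵tc⁹ + Q²tr⁵tc¹¹) + a⁸tr⁶tc¹², an element of the Laurent polynomial ring ℤ[a^{±1}, Q^{±1}, tr^{±1}, tc^{±1}]. Then P̃ is invariant under the ring endomorphism fixing a, tr, tc and sending Q ↦ Q^{−1}tr^{−1}tc^{−2}; that is, P̃(a, Q^{−1}tr^{−1}tc^{−2}, tr, tc) = P̃(a, Q, tr, tc). -/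
/-- The Laurent monomial `a^i * q^j * tr^k * tc^l` (with variables invertible). -/
noncomputable def monoT {R : Type*} [CommRing R] (a q tr tc : Rˣ) (i j k l : ℤ) : R :=
  ((a ^ i * q ^ j * tr ^ k * tc ^ l : Rˣ) : R)

/-- Tilde-version of the quadruply-graded `S²`-colored homology of the trefoil,
in `(a,Q,tr,tc)` gradings. -/
noncomputable def PtildeTref {R : Type*} [CommRing R] (a Q tr tc : Rˣ) : R :=
  monoT a Q tr tc 4 (-4) 0 0 +
    monoT a Q tr tc 4 0 2 4 +
    monoT a Q tr tc 4 0 2 6 +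
    monoT a Q tr tc 4 4 4 8 +
    monoT a Q tr tc 6 (-2) 3 5 +
    monoT a Q tr tc 6 (-2) 3 7 +
    monoT a Q tr tc 6 2 5 9 +
    monoT a Q tr tc 6 2 5 11 +
    monoT a Q tr tc 8 0 6 12

lemma monoT_sub {R : Type*} [CommRing R] (a Q tr tc : Rˣ) (i j k l : ℤ) :
    monoT a (Q⁻¹ * tr⁻¹ * tc ^ (-2 : ℤ)) tr tc i j k l
      = monoT a Q tr tc i (-j) (k - j) (l - 2 * j) := by
  unfold monoT
  congr 1
  simp only [mul_zpow, inv_zpow, ← zpow_neg, ← zpow_mul, zpow_sub]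
  rw [neg_mul]
  simp only [mul_comm, mul_assoc, mul_left_comm]

/-- Self-symmetry of the tilde-version `S²`-colored homology of the trefoil:
invariance under `Q ↦ Q⁻¹ tr⁻¹ tc⁻²`. -/
theorem stmt_7 {R : Type*} [CommRing R] (a Q tr tc : Rˣ) :
    PtildeTref a (Q⁻¹ * tr⁻¹ * tc ^ (-2 : ℤ)) tr tc = PtildeTref a Q tr tc := by
  simp only [PtildeTref, monoT_sub]
  norm_num
  ring
end

section
/- Let P̃S(a,Q,tr,tc) = a⁴(Q^{−4} + tr²tc⁴ + tr²tc⁶ + Q⁴tr⁴tc⁸) + a⁶(Q^{−2}tr³tc⁵ + Q^{−2}tr³tc⁷ + Q²tr⁵tc⁹ + Q²tr⁵tc¹¹) + a⁸tr⁶tc¹² and P̃Λ(a,Q,tr,tc) = a⁴(Q^{−4} + tr⁶tc² + tr⁴tc² + Q⁴tr⁸tc⁴) + a⁶(Q^{−2}tr⁷tc³ + Q^{−2}tr⁵tc³ + Q²tr¹¹tc⁵ + Q²tr⁹tc⁵) + a⁸tr¹²tc⁶, both elements of ℤ[a^{±1}, Q^{±1}, tr^{±1}, tc^{±1}]. Then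 P̃Λ(a,Q,tr,tc) = P̃S(a,Q,tc,tr), i.e. the two Laurent polynomials are exchanged by swapping the variables tr and tc. -/
/-- The Laurent monomial `a^i * q^j * tr^k * tc^l` (with variables invertible). -/
noncomputable def monoM {R : Type*} [CommRing R] (a q tr tc : Rˣ) (i j k l : ℤ) : R :=
  ((a ^ i * q ^ j * tr ^ k * tc ^ l : Rˣ) : R)

/-- Tilde-version of the `S²`-colored homology of the trefoil. -/
noncomputable def PtildeS {R : Type*} [CommRing R] (a Q tr tc : Rˣ) : R :=
  monoM a Q tr tc 4 (-4) 0 0 +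
    monoM a Q tr tc 4 0 2 4 +
    monoM a Q tr tc 4 0 2 6 +
    monoM a Q tr tc 4 4 4 8 +
    monoM a Q tr tc 6 (-2) 3 5 +
    monoM a Q tr tc 6 (-2) 3 7 +
    monoM a Q tr tc 6 2 5 9 +
    monoM a Q tr tc 6 2 5 11 +
    monoM a Q tr tc 8 0 6 12

/-- Tilde-version of the `Λ²`-colored homology of the trefoil. -/
noncomputable def PtildeL {R : Type*} [CommRing R] (a Q tr tc : Rˣ) : R :=
  monoM a Q tr tc 4 (-4) 0 0 +
    monoM a Q tr tc 4 0 6 2 +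
    monoM a Q tr tc 4 0 4 2 +
    monoM a Q tr tc 4 4 8 4 +
    monoM a Q tr tc 6 (-2) 7 3 +
    monoM a Q tr tc 6 (-2) 5 3 +
    monoM a Q tr tc 6 2 11 5 +
    monoM a Q tr tc 6 2 9 5 +
    monoM a Q tr tc 8 0 12 6

/-- Mirror symmetry: the tilde `Λ²`- and `S²`-colored homologies of the trefoil are
exchanged by swapping `tr` and `tc`. -/
theorem stmt_8 {R : Type*} [CommRing R] (a Q tr tc : Rˣ) :
    PtildeL a Q tr tc = PtildeS a Q tc tr := by
  simp only [PtildeL, PtildeS, monoM, mul_right_comm]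
  abel
end

section
/- Let P̃(a,Q,tr,tc) = a⁴tr⁴tc⁸ + a²(Q^{−2}tr·tc + Q^{−2}tr·tc³ + tr²tc² + tr²tc⁴ + Q²tr³tc⁵ + Q²tr³tc⁷) + (Q^{−4}tr^{−2}tc^{−4} + Q^{−2}tr^{−1}tc^{−3} + Q^{−2}tr^{−1}tc^{−1} + tc^{−2} + 3 + tc² + Q²tr·tc + Q²tr·tc³ + Q⁴tr²tc⁴) + a^{−2}(Q^{−2}tr^{−3}tc^{−7} + Q^{−2}tr^{−3}tc^{−5} + tr^{−2}tc^{−4} + tr^{−2}tc^{−2} + Q²tr^{−1}tc^{−3} + Q²tr^{−1}tc^{−1}) + a^{−4}tr^{−4}tc^{−8}, an element of ℤ[a^{±1}, Q^{±1}, tr^{±1}, tc^{±1}]. Then P̃ is invariant under the substitution Q ↦ Q^{−1}tr^{−1}tc^{−2} (with a, tr, tc fixed): P̃(a, Q^{−1}tr^{−1}tc^{−2}, tr, tc) = P̃(a, Q, tr, tc). -/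
/-- The Laurent monomial `a^i * q^j * tr^k * tc^l` (with variables invertible). -/
noncomputable def monoG {R : Type*} [CommRing R] (a q tr tc : Rˣ) (i j k l : ℤ) : R :=
  ((a ^ i * q ^ j * tr ^ k * tc ^ l : Rˣ) : R)

/-- Tilde-version of the quadruply-graded `S²`-colored homology of the figure-eight knot. -/
noncomputable def PtildeFigEight {R : Type*} [CommRing R] (a Q tr tc : Rˣ) : R :=
  monoG a Q tr tc 4 0 4 8 +
    monoG a Q tr tc 2 (-2) 1 1 +
    monoG a Q tr tc 2 (-2) 1 3 +
    monoG a Q tr tc 2 0 2 2 +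
    monoG a Q tr tc 2 0 2 4 +
    monoG a Q tr tc 2 2 3 5 +
    monoG a Q tr tc 2 2 3 7 +
    monoG a Q tr tc 0 (-4) (-2) (-4) +
    monoG a Q tr tc 0 (-2) (-1) (-3) +
    monoG a Q tr tc 0 (-2) (-1) (-1) +
    monoG a Q tr tc 0 0 0 (-2) +
    3 * monoG a Q tr tc 0 0 0 0 +
    monoG a Q tr tc 0 0 0 2 +
    monoG a Q tr tc 0 2 1 1 +
    monoG a Q tr tc 0 2 1 3 +
    monoG a Q tr tc 0 4 2 4 +
    monoG a Q tr tc (-2) (-2) (-3) (-7) +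
    monoG a Q tr tc (-2) (-2) (-3) (-5) +
    monoG a Q tr tc (-2) 0 (-2) (-4) +
    monoG a Q tr tc (-2) 0 (-2) (-2) +
    monoG a Q tr tc (-2) 2 (-1) (-3) +
    monoG a Q tr tc (-2) 2 (-1) (-1) +
    monoG a Q tr tc (-4) 0 (-4) (-8)

lemma monoG_subst {R : Type*} [CommRing R] (a Q tr tc : Rˣ) (i j k l : ℤ) :
    monoG a (Q⁻¹ * tr⁻¹ * tc ^ (-2 : ℤ)) tr tc i j k l
      = monoG a Q tr tc i (-j) (k - j) (l - 2 * j) := by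
  unfold monoG
  congr 1
  rw [mul_zpow, mul_zpow, inv_zpow, inv_zpow, ← zpow_neg, ← zpow_neg, ← zpow_mul,
    zpow_sub, zpow_sub, zpow_neg, zpow_neg]
  rw [neg_mul, zpow_neg]
  simp only [mul_comm, mul_assoc, mul_left_comm]

/-- Self-symmetry of the tilde `S²`-colored homology of the figure-eight knot:
invariance under `Q ↦ Q⁻¹ tr⁻¹ tc⁻²`. -/
theorem stmt_12 {R : Type*} [CommRing R] (a Q tr tc : Rˣ) :
    PtildeFigEight a (Q⁻¹ * tr⁻¹ * tc ^ (-2 : ℤ)) tr tc = PtildeFigEight a Q tr tc := by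
  unfold PtildeFigEight
  simp only [monoG_subst]
  norm_num
  ring
end
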